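/- Let X_1, X_2, ..., X_N be i.i.d. real random variables with E(X_k)=0, Var(X_k)=1, and moment generating function E(e^{u X_k}) finite for |u| ≤ u_0 for some u_0 > 0, and let S_j = X_1 + ... + X_j for 1 ≤ j ≤ N, S_0 = 0. Then for every C > 1 there exists N_0(C) such that for all N ≥ N_0(C): P( max_{0 ≤ j ≤ N} |S_j| ≥ (2 C N log N)^{1/2} ) ≤ 2 N^{1-C}. -/

import Mathlib

open MeasureTheory ProbabilityTheory Filter

open Real
open scoped ENNReal NNReal

lemma my_exp_le_one_add_mul_exp (t : ℝ) : Real.exp t ≤ 1 + t * Real.exp t := by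
  have h1 : 1 - t ≤ Real.exp (-t) := by linarith [Real.add_one_le_exp (-t)]
  have h2 : (1 - t) * Real.exp t ≤ Real.exp (-t) * Real.exp t :=
    mul_le_mul_of_nonneg_right h1 (Real.exp_pos t).le
  rw [← Real.exp_add] at h2
  simp at h2
  nlinarith

lemma my_exp_quad_nonpos {t : ℝ} (ht : t ≤ 0) : Real.exp t ≤ 1 + t + t ^ 2 / 2 := by
  have h : AntitoneOn (fun t : ℝ => 1 + t + t ^ 2 / 2 - Real.exp t) (Set.Iic (0 : ℝ)) := by
    apply antitoneOn_of_deriv_nonpos (convex_Iic 0)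
    · fun_prop
    · fun_prop
    · intro x hx
      have H : HasDerivAt (fun t : ℝ => 1 + t + t ^ 2 / 2 - Real.exp t)
          (0 + 1 + (↑2 * x ^ 1) / 2 - Real.exp x) x := by
        exact ((((hasDerivAt_const x (1:ℝ)).add (hasDerivAt_id x)).add
          ((hasDerivAt_pow 2 x).div_const 2)).sub (Real.hasDerivAt_exp x))
      rw [H.deriv]
      have := Real.add_one_le_exp x
      simp only [pow_one]
      push_cast
      nlinarith
  have h0 : (0:ℝ) ∈ Set.Iic (0:ℝ) := Set.mem_Iic.2 le_rfl
  have := h (Set.mem_Iic.2 ht) h0 ht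
  simp at this
  nlinarith [this]

lemma my_exp_quad_nonneg {t : ℝ} (ht : 0 ≤ t) :
    Real.exp t ≤ 1 + t + t ^ 2 / 2 * Real.exp t := by
  have h : MonotoneOn (fun t : ℝ => 1 + t + t ^ 2 / 2 * Real.exp t - Real.exp t)
      (Set.Ici (0 : ℝ)) := by
    apply monotoneOn_of_deriv_nonneg (convex_Ici 0)
    · fun_prop
    · fun_prop
    · intro x hx
      have H : HasDerivAt (fun t : ℝ => 1 + t + t ^ 2 / 2 * Real.exp t - Real.exp t)
          (0 + 1 + ((↑2 * x ^ 1) / 2 * Real.exp x + x ^ 2 / 2 * Real.exp x) - Real.exp x) x := by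
        exact ((((hasDerivAt_const x (1:ℝ)).add (hasDerivAt_id x)).add
          (((hasDerivAt_pow 2 x).div_const 2).mul (Real.hasDerivAt_exp x))).sub
          (Real.hasDerivAt_exp x))
      rw [H.deriv]
      have hx' : (0:ℝ) < x := by simpa using hx
      -- (1 - x) * exp x ≤ 1
      have h1 : (1 - x) * Real.exp x ≤ 1 := by
        have hh : 1 - x ≤ Real.exp (-x) := by linarith [Real.add_one_le_exp (-x)]
        have := mul_le_mul_of_nonneg_right hh (Real.exp_pos x).le
        rw [← Real.exp_add] at this
        simpa using this
      simp only [pow_one]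
      push_cast
      nlinarith [Real.exp_pos x, sq_nonneg x]
  have h0 : (0:ℝ) ∈ Set.Ici (0:ℝ) := Set.mem_Ici.2 le_rfl
  have := h h0 (Set.mem_Ici.2 ht) ht
  simp at this
  nlinarith [this]

lemma my_exp_taylor (t : ℝ) : Real.exp t ≤ 1 + t + t ^ 2 / 2 * Real.exp |t| := by
  rcases le_or_gt 0 t with h | h
  · rw [abs_of_nonneg h]; exact my_exp_quad_nonneg h
  · rw [abs_of_neg h]
    have := my_exp_quad_nonpos h.le
    have h1 : (1:ℝ) ≤ Real.exp (-t) := Real.one_le_exp (by linarith)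
    nlinarith [sq_nonneg t]

lemma my_cube_le (t : ℝ) (ht : 0 ≤ t) : t ^ 3 ≤ 6 * Real.exp t := by
  have := Real.sum_le_exp_of_nonneg ht 4
  simp [Finset.sum_range_succ, Nat.factorial] at this
  nlinarith [sq_nonneg t, ht]

lemma my_sq_le (t : ℝ) (ht : 0 ≤ t) : t ^ 2 ≤ 2 * Real.exp t := by
  have := Real.sum_le_exp_of_nonneg ht 3
  simp [Finset.sum_range_succ, Nat.factorial] at this
  nlinarith [ht]

lemma my_abs_le (t : ℝ) : |t| ≤ Real.exp |t| := by
  nlinarith [Real.add_one_le_exp |t|, abs_nonneg t]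

lemma doob_helper {Ω : Type*} [m0 : MeasurableSpace Ω] (P : Measure Ω) [IsProbabilityMeasure P]
    (X : ℕ → Ω → ℝ) (hmeas : ∀ k, Measurable (X k))
    (hindep : iIndepFun X P)
    (u a : ℝ) (hu : 0 < u) (ha : 0 < a)
    (hint : ∀ k, Integrable (fun ω => Real.exp (u * X k ω)) P)
    (h1 : ∀ k, 1 ≤ ∫ ω, Real.exp (u * X k ω) ∂P)
    (N : ℕ) (hN : 1 ≤ N) :
    P {ω | ∃ j ≤ N, a ≤ ∑ i ∈ Finset.range j, X i ω}
      ≤ ENNReal.ofReal (Real.exp (-(u * a)) * ∏ i ∈ Finset.range N, mgf (X i) P u) := by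
  classical
  have hsm : ∀ k, StronglyMeasurable (X k) := fun k => (hmeas k).stronglyMeasurable
  set ℱ := Filtration.natural X hsm with hℱ
  set g : ℕ → Ω → ℝ := fun k ω => Real.exp (u * ∑ i ∈ Finset.range (k + 1), X i ω) with hg
  have hintg : ∀ k, Integrable (g k) P := by
    intro k
    have := hindep.integrable_exp_mul_sum (t := u) hmeas
      (s := Finset.range (k + 1)) (fun i _ => hint i)
    simpa [g, Finset.sum_apply] using this
  have hadp : StronglyAdapted ℱ g := by
    intro k
    have hS : StronglyMeasurable[ℱ k] (fun ω => ∑ i ∈ Finset.range (k + 1), X i ω) := by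
      apply Finset.stronglyMeasurable_fun_sum
      intro i hi
      exact (Filtration.stronglyAdapted_natural hsm i).mono
        (ℱ.mono (Nat.lt_succ_iff.mp (Finset.mem_range.mp hi)))
    exact Real.continuous_exp.comp_stronglyMeasurable (hS.const_mul u)
  have hstep : ∀ i, g i ≤ᵐ[P] P[g (i + 1)|ℱ i] := by
    intro i
    have hdecomp : g (i + 1) = fun ω => g i ω * Real.exp (u * X (i + 1) ω) := by
      funext ω
      simp [g, Finset.sum_range_succ, mul_add, Real.exp_add]
    have hone : StronglyMeasurable[MeasurableSpace.comap (X (i + 1)) inferInstance]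
        (fun ω => Real.exp (u * X (i + 1) ω)) :=
      (((comap_measurable (X (i + 1))).const_mul u).exp).stronglyMeasurable
    have hindep' : Indep (MeasurableSpace.comap (X (i + 1)) inferInstance) (ℱ i) P :=
      hindep.indep_comap_natural_of_lt hsm (lt_add_one i)
    have hcond : P[(fun ω => Real.exp (u * X (i + 1) ω))|ℱ i]
        =ᵐ[P] fun _ => ∫ ω, Real.exp (u * X (i + 1) ω) ∂P :=
      condExp_indep_eq ((hmeas (i + 1)).comap_le) (ℱ.le i) hone hindep'
    have hmul : P[g (i + 1)|ℱ i] =ᵐ[P] (g i) * P[(fun ω => Real.exp (u * X (i + 1) ω))|ℱ i] := by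
      rw [hdecomp]
      exact condExp_mul_of_stronglyMeasurable_left (hadp i)
        ((hintg (i + 1)).congr (Filter.Eventually.of_forall fun ω => by simp [hdecomp]))
        (hint (i + 1))
    filter_upwards [hmul, hcond] with ω hω₁ hω₂
    rw [hω₁, Pi.mul_apply, hω₂]
    have hg0 : 0 ≤ g i ω := (Real.exp_pos _).le
    nlinarith [h1 (i + 1), hg0]
  have hsub : Submartingale g ℱ P := submartingale_nat hadp hintg hstep
  have hnonneg : 0 ≤ g := fun k ω => (Real.exp_pos _).le
  set ε : NNReal := (Real.exp (u * a)).toNNReal with hε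
  set B : Set Ω := {ω | (ε : ℝ) ≤ (Finset.range (N - 1 + 1)).sup'
      Finset.nonempty_range_add_one fun k => g k ω} with hB
  have hmax : (ε : ℝ≥0∞) * P B ≤ ENNReal.ofReal (∫ ω in B, g (N - 1) ω ∂P) := by
    simpa [smul_eq_mul, hB] using maximal_ineq hsub hnonneg (ε := ε) (N - 1)
  have hN1 : N - 1 + 1 = N := Nat.succ_pred_eq_of_pos hN
  have hsubset : {ω | ∃ j ≤ N, a ≤ ∑ i ∈ Finset.range j, X i ω} ⊆ B := by
    rintro ω ⟨j, hjN, hja⟩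
    have hj0 : j ≠ 0 := by
      rintro rfl
      simp at hja
      linarith
    obtain ⟨m, rfl⟩ := Nat.exists_eq_succ_of_ne_zero hj0
    have hm : m ∈ Finset.range (N - 1 + 1) := Finset.mem_range.mpr (by omega)
    have hle : (ε : ℝ) ≤ g m ω := by
      rw [hε, Real.coe_toNNReal _ (Real.exp_pos _).le]
      exact Real.exp_le_exp.mpr (mul_le_mul_of_nonneg_left hja hu.le)
    exact le_trans hle (Finset.le_sup' (fun k => g k ω) hm)
  have hsetint : ∫ ω in B, g (N - 1) ω ∂P ≤ ∫ ω, g (N - 1) ω ∂P :=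
    setIntegral_le_integral (hintg (N - 1)) (Filter.Eventually.of_forall fun ω => hnonneg _ ω)
  have hfull : ∫ ω, g (N - 1) ω ∂P = ∏ i ∈ Finset.range N, mgf (X i) P u := by
    have hms := hindep.mgf_sum (t := u) hmeas (Finset.range N)
    rw [← hms]
    simp only [g, hN1, mgf, Finset.sum_apply]
  have hεne : (ε : ℝ≥0∞) ≠ 0 := by
    simp [hε, Real.toNNReal_eq_zero, not_le, Real.exp_pos]
  have hεtop : (ε : ℝ≥0∞) ≠ ⊤ := ENNReal.coe_ne_top
  have key : (ε : ℝ≥0∞) * P B ≤ ENNReal.ofReal (∏ i ∈ Finset.range N, mgf (X i) P u) :=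
    le_trans hmax (ENNReal.ofReal_le_ofReal (le_trans hsetint hfull.le))
  have step2 : P B ≤ (ε : ℝ≥0∞)⁻¹ * ENNReal.ofReal (∏ i ∈ Finset.range N, mgf (X i) P u) := by
    rw [← one_mul (P B), ← ENNReal.inv_mul_cancel hεne hεtop, mul_assoc]
    exact mul_le_mul_right key _
  refine le_trans (measure_mono hsubset) (le_trans step2 (le_of_eq ?_))
  have hcoe : (ε : ℝ≥0∞) = ENNReal.ofReal (Real.exp (u * a)) := by
    simp [hε, ENNReal.ofReal]
  rw [hcoe, ← ENNReal.ofReal_inv_of_pos (Real.exp_pos _), ← Real.exp_neg,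
    ← ENNReal.ofReal_mul (Real.exp_nonneg _)]

lemma my_exp_abs_le (c x : ℝ) : Real.exp (c * |x|) ≤ Real.exp (c * x) + Real.exp (-c * x) := by
  rcases abs_cases x with ⟨h, _⟩ | ⟨h, _⟩
  · rw [h]; linarith [Real.exp_pos (-c * x)]
  · rw [h, mul_neg, ← neg_mul]; linarith [Real.exp_pos (c * x)]

/-- Let `X_1, X_2, …` be i.i.d. real random variables with mean `0`, variance `1`,
and moment generating function finite on `|u| ≤ u₀` for some `u₀ > 0`; let
`S_j = X_1 + ⋯ + X_j` (here `S j ω = Σ_{i<j} X i ω`, `S_0 = 0`).  Then for every `C > 1`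
there is `N₀(C)` such that for all `N ≥ N₀(C)`:
`P( max_{0 ≤ j ≤ N} |S_j| ≥ (2 C N log N)^{1/2} ) ≤ 2 N^{1−C}`. -/
theorem statement0 {Ω : Type*} [MeasurableSpace Ω] (P : Measure Ω) [IsProbabilityMeasure P]
    (X : ℕ → Ω → ℝ)
    (hmeas : ∀ k, Measurable (X k))
    (hindep : iIndepFun X P)
    (hident : ∀ k, IdentDistrib (X k) (X 0) P P)
    (hmean : ∀ k, ∫ ω, X k ω ∂P = 0)
    (hvar : ∀ k, variance (X k) P = 1)
    (u₀ : ℝ) (hu₀ : 0 < u₀)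
    (hmgf : ∀ k, ∀ u : ℝ, |u| ≤ u₀ → Integrable (fun ω => Real.exp (u * X k ω)) P) :
    ∀ C : ℝ, 1 < C → ∃ N₀ : ℕ, ∀ N : ℕ, N₀ ≤ N →
      P {ω | ∃ j ≤ N, (2 * C * N * Real.log N) ^ ((1:ℝ)/2)
          ≤ |∑ i ∈ Finset.range j, X i ω|}
        ≤ ENNReal.ofReal (2 * (N : ℝ) ^ (1 - C)) := by
  classical
  have habsu₀ : |u₀| ≤ u₀ := by rw [abs_of_pos hu₀]
  have habsu₀' : |(-u₀)| ≤ u₀ := by rw [abs_neg, abs_of_pos hu₀]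
  -- dominating integrable function
  have hD : ∀ k, Integrable (fun ω => Real.exp (u₀ * X k ω) + Real.exp (-u₀ * X k ω)) P :=
    fun k => (hmgf k u₀ habsu₀).add (hmgf k (-u₀) habsu₀')
  -- integrability of X k
  have hintX : ∀ k, Integrable (X k) P := by
    intro k
    refine Integrable.mono' ((hD k).const_mul (1/u₀)) (hmeas k).aestronglyMeasurable
      (Filter.Eventually.of_forall fun ω => ?_)
    have h1 : u₀ * |X k ω| ≤ Real.exp (u₀ * |X k ω|) := by
      have h := my_abs_le (u₀ * |X k ω|)
      rwa [abs_of_nonneg (by positivity)] at h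
    have h2 := my_exp_abs_le u₀ (X k ω)
    rw [Real.norm_eq_abs]
    rw [div_mul_eq_mul_div, one_mul, le_div_iff₀ hu₀, mul_comm]
    linarith
  -- integrability of (X 0)^2
  have hintX2 : Integrable (fun ω => (X 0 ω) ^ 2) P := by
    refine Integrable.mono' ((hD 0).const_mul (2/u₀^2)) ((hmeas 0).pow_const 2).aestronglyMeasurable
      (Filter.Eventually.of_forall fun ω => ?_)
    have h1 := my_sq_le (u₀ * |X 0 ω|) (by positivity)
    have h2 := my_exp_abs_le u₀ (X 0 ω)
    rw [Real.norm_eq_abs, abs_of_nonneg (sq_nonneg _)]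
    have h3 : (u₀ * |X 0 ω|) ^ 2 = u₀^2 * (X 0 ω)^2 := by
      rw [mul_pow, sq_abs]
    rw [div_mul_eq_mul_div, le_div_iff₀ (by positivity)]
    nlinarith
  -- integrability of |X 0|^3 * exp (u₀/2 * |X 0|)
  have hintW : Integrable (fun ω => |X 0 ω| ^ 3 * Real.exp (u₀/2 * |X 0 ω|)) P := by
    refine Integrable.mono' ((hD 0).const_mul (48/u₀^3))
      ((((hmeas 0).abs.pow_const 3).mul (((hmeas 0).abs.const_mul (u₀/2)).exp)).aestronglyMeasurable)
      (Filter.Eventually.of_forall fun ω => ?_)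
    set y := |X 0 ω| with hy
    have hy0 : 0 ≤ y := abs_nonneg _
    have h1 := my_cube_le (u₀/2 * y) (by positivity)
    have h2 := my_exp_abs_le u₀ (X 0 ω)
    have hmulexp : Real.exp (u₀/2 * y) * Real.exp (u₀/2 * y) = Real.exp (u₀ * y) := by
      rw [← Real.exp_add]; ring_nf
    have hE0 : 0 < Real.exp (u₀/2 * y) := Real.exp_pos _
    rw [Real.norm_eq_abs, abs_of_nonneg (by positivity)]
    have h3 : (u₀/2 * y)^3 = u₀^3/8 * y^3 := by ring
    -- y^3 ≤ 48/u₀^3 * exp(u₀/2 * y)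
    have h4 : y^3 * Real.exp (u₀/2 * y) ≤ 48/u₀^3 * Real.exp (u₀ * y) := by
      rw [← hmulexp]
      have h5 : y^3 ≤ 48/u₀^3 * Real.exp (u₀/2 * y) := by
        rw [h3] at h1
        rw [div_mul_eq_mul_div, le_div_iff₀ (by positivity)]
        nlinarith
      calc y^3 * Real.exp (u₀/2 * y) ≤ (48/u₀^3 * Real.exp (u₀/2 * y)) * Real.exp (u₀/2 * y) :=
            mul_le_mul_of_nonneg_right h5 hE0.le
        _ = 48/u₀^3 * (Real.exp (u₀/2 * y) * Real.exp (u₀/2 * y)) := by ring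
    rw [← hy] at h2
    have h48 : (0:ℝ) ≤ 48/u₀^3 := by positivity
    nlinarith [h4, mul_le_mul_of_nonneg_left h2 h48]
  -- second moment is 1
  have hEX2 : ∫ ω, (X 0 ω) ^ 2 ∂P = 1 := by
    have hmem : MemLp (X 0) 2 P :=
      (memLp_two_iff_integrable_sq (hmeas 0).aestronglyMeasurable).2 hintX2
    have hv := variance_eq_sub hmem
    rw [hvar 0] at hv
    have hm0 : P[X 0] = 0 := hmean 0
    have : P[X 0 ^ 2] = ∫ ω, (X 0 ω) ^ 2 ∂P := by
      congr 1
    rw [hm0] at hv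
    simp only [Pi.pow_apply] at hv
    nlinarith [hv]
  -- one lower bound for exponential integrals
  have hone : ∀ w : ℝ, |w| ≤ u₀ → ∀ k, 1 ≤ ∫ ω, Real.exp (w * X k ω) ∂P := by
    intro w hw k
    have hint1 : Integrable (fun ω => 1 + w * X k ω) P :=
      (integrable_const 1).add ((hintX k).const_mul w)
    have hmono : ∫ ω, (1 + w * X k ω) ∂P ≤ ∫ ω, Real.exp (w * X k ω) ∂P := by
      refine integral_mono hint1 (hmgf k w hw) fun ω => ?_
      have := Real.add_one_le_exp (w * X k ω)
      simp only
      linarith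
    have hval : ∫ ω, (1 + w * X k ω) ∂P = 1 := by
      rw [integral_add (integrable_const 1) ((hintX k).const_mul w), integral_const_mul,
        hmean k, mul_zero, add_zero]
      simp
    linarith [hmono, hval.symm.le]
  set M₀ : ℝ := ∫ ω, |X 0 ω| ^ 3 * Real.exp (u₀/2 * |X 0 ω|) ∂P with hM₀def
  have hM₀ : 0 ≤ M₀ := integral_nonneg fun ω => by positivity
  intro C hC
  have hC0 : (0:ℝ) < C := by linarith
  have hC1 : (0:ℝ) < C - 1 := by linarith
  set v : ℝ := C / (C - 1) with hvdef
  have hv0 : 0 < v := div_pos hC0 hC1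
  have hv1 : 1 < v := (one_lt_div hC1).2 (by linarith)
  set u₁ : ℝ := min (u₀/2) ((v-1)/(M₀+1)) with hu₁def
  have hu₁ : 0 < u₁ := lt_min (by linarith) (div_pos (by linarith) (by linarith))
  -- mgf bound
  have hmgfb : ∀ w : ℝ, |w| ≤ u₁ → mgf (X 0) P w ≤ Real.exp (v * w^2 / 2) := by
    intro w hw
    have hwu : |w| ≤ u₀/2 := le_trans hw (min_le_left _ _)
    have hwu0 : |w| ≤ u₀ := by linarith
    have hptw : ∀ ω, Real.exp (w * X 0 ω) ≤
        1 + w * X 0 ω + w^2/2 * (X 0 ω)^2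
          + |w|^3/2 * (|X 0 ω|^3 * Real.exp (u₀/2 * |X 0 ω|)) := by
      intro ω
      set y := X 0 ω with hy
      set E := Real.exp (u₀/2 * |y|) with hE
      have hE0 : (0:ℝ) < E := Real.exp_pos _
      have habsmul : |w * y| = |w| * |y| := abs_mul w y
      have t3 : Real.exp (|w| * |y|) ≤ E := by
        rw [Real.exp_le_exp]
        exact mul_le_mul_of_nonneg_right hwu (abs_nonneg y)
      have e1 : Real.exp (|w| * |y|) ≤ 1 + (|w| * |y|) * E := by
        have t2 := my_exp_le_one_add_mul_exp (|w| * |y|)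
        have h3 : (|w| * |y|) * Real.exp (|w| * |y|) ≤ (|w| * |y|) * E :=
          mul_le_mul_of_nonneg_left t3 (by positivity)
        linarith
      have t1 := my_exp_taylor (w * y)
      rw [habsmul] at t1
      have step : (w * y)^2 / 2 * Real.exp (|w| * |y|) ≤
          w^2/2 * y^2 + |w|^3/2 * (|y|^3 * E) := by
        have h4 : (w * y)^2 / 2 * Real.exp (|w| * |y|) ≤ (w * y)^2 / 2 * (1 + (|w| * |y|) * E) :=
          mul_le_mul_of_nonneg_left e1 (by positivity)
        have h5 : (w * y)^2 * (|w| * |y|) = |w|^3 * |y|^3 := by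
          rw [mul_pow, ← sq_abs w, ← sq_abs y]; ring
        calc (w * y)^2 / 2 * Real.exp (|w| * |y|) ≤ (w * y)^2 / 2 * (1 + (|w| * |y|) * E) := h4
          _ = (w*y)^2/2 + ((w * y)^2 * (|w| * |y|)) * E / 2 := by ring
          _ = w^2/2 * y^2 + |w|^3/2 * (|y|^3 * E) := by rw [h5, mul_pow]; ring
      linarith
    have i1 : Integrable (fun ω => 1 + w * X 0 ω) P :=
      (integrable_const 1).add ((hintX 0).const_mul w)
    have i2 : Integrable (fun ω => w^2/2 * (X 0 ω)^2) P := hintX2.const_mul _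
    have i3 : Integrable (fun ω => |w|^3/2 * (|X 0 ω|^3 * Real.exp (u₀/2 * |X 0 ω|))) P :=
      hintW.const_mul _
    have i12 : Integrable (fun ω => 1 + w * X 0 ω + w^2/2 * (X 0 ω)^2) P := i1.add i2
    have hintRHS : Integrable (fun ω => 1 + w * X 0 ω + w^2/2 * (X 0 ω)^2
        + |w|^3/2 * (|X 0 ω|^3 * Real.exp (u₀/2 * |X 0 ω|))) P := i12.add i3
    have hintL : ∫ ω, Real.exp (w * X 0 ω) ∂P ≤ 1 + w^2/2 + |w|^3/2 * M₀ := by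
      have hI := integral_mono (hmgf 0 w hwu0) hintRHS hptw
      have hval : ∫ ω, (1 + w * X 0 ω + w^2/2 * (X 0 ω)^2
          + |w|^3/2 * (|X 0 ω|^3 * Real.exp (u₀/2 * |X 0 ω|))) ∂P
          = 1 + w^2/2 + |w|^3/2 * M₀ := by
        rw [integral_add i12 i3, integral_add i1 i2,
          integral_add (integrable_const 1) ((hintX 0).const_mul w),
          integral_const_mul, integral_const_mul, integral_const_mul,
          hmean 0, hEX2, ← hM₀def]
        simp
      linarith [hI, hval.le]
    have hM1 : |w| * M₀ ≤ v - 1 := by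
      have h6 : |w| ≤ (v-1)/(M₀+1) := le_trans hw (min_le_right _ _)
      have h7 : |w| * M₀ ≤ (v-1)/(M₀+1) * M₀ := mul_le_mul_of_nonneg_right h6 hM₀
      have h8 : (v-1)/(M₀+1) * M₀ ≤ v - 1 := by
        rw [div_mul_eq_mul_div, div_le_iff₀ (by linarith)]
        nlinarith
      linarith
    have habs3 : |w|^3 = |w| * w^2 := by rw [← sq_abs w]; ring
    have hfin : 1 + w^2/2 + |w|^3/2 * M₀ ≤ 1 + v * w^2/2 := by
      rw [habs3]
      nlinarith [sq_nonneg w, abs_nonneg w]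
    have hexp : 1 + v * w^2/2 ≤ Real.exp (v * w^2/2) := by
      linarith [Real.add_one_le_exp (v * w^2/2)]
    have : mgf (X 0) P w = ∫ ω, Real.exp (w * X 0 ω) ∂P := rfl
    rw [this]
    calc ∫ ω, Real.exp (w * X 0 ω) ∂P ≤ 1 + w^2/2 + |w|^3/2 * M₀ := hintL
      _ ≤ 1 + v * w^2/2 := hfin
      _ ≤ Real.exp (v * w^2/2) := hexp
  -- eventual smallness of log N / N
  have htend : Filter.Tendsto (fun N : ℕ => Real.log N / (N:ℝ)) atTop (nhds 0) :=
    (Real.isLittleO_log_id_atTop.tendsto_div_nhds_zero).comp tendsto_natCast_atTop_atTop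
  have hEv : ∀ᶠ N : ℕ in atTop, Real.log N / (N:ℝ) < u₁^2 * v^2 / (2*C) :=
    htend.eventually_lt_const (by positivity)
  obtain ⟨N₀, hN₀⟩ := Filter.eventually_atTop.1 (hEv.and (Filter.eventually_ge_atTop 3))
  refine ⟨N₀, fun N hNN => ?_⟩
  obtain ⟨hNc, hN3⟩ := hN₀ N hNN
  have hNR : (3:ℝ) ≤ (N:ℝ) := by exact_mod_cast hN3
  have hNpos : (0:ℝ) < N := by linarith
  have hN1R : (1:ℝ) < N := by linarith
  have hlogpos : 0 < Real.log N := Real.log_pos hN1R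
  set z : ℝ := 2 * C * (N:ℝ) * Real.log N with hzdef
  have hz : 0 < z := by positivity
  set a : ℝ := z ^ ((1:ℝ)/2) with hadef
  have ha : 0 < a := Real.rpow_pos_of_pos hz _
  have ha2 : a^2 = z := by
    rw [hadef, ← Real.rpow_natCast (z ^ ((1:ℝ)/2)) 2, ← Real.rpow_mul hz.le]
    norm_num
  set u : ℝ := a / ((N:ℝ) * v) with hudef
  have hu : 0 < u := div_pos ha (by positivity)
  have hu1 : u ≤ u₁ := by
    have hlogN : Real.log N ≤ u₁^2 * v^2 / (2*C) * N := (div_le_iff₀ hNpos).1 hNc.le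
    have hz2 : z ≤ (u₁ * ((N:ℝ) * v))^2 := by
      have : (u₁ * ((N:ℝ) * v))^2 = u₁^2 * v^2 * ((N:ℝ)^2) := by ring
      rw [this, hzdef]
      have h9 : 2 * C * (N:ℝ) * Real.log N ≤ 2 * C * (N:ℝ) * (u₁^2 * v^2 / (2*C) * N) := by
        apply mul_le_mul_of_nonneg_left hlogN (by positivity)
      calc 2 * C * (N:ℝ) * Real.log N ≤ 2 * C * (N:ℝ) * (u₁^2 * v^2 / (2*C) * N) := h9
        _ = u₁^2 * v^2 * ((N:ℝ)^2) := by field_simp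
    have haa : a ≤ u₁ * ((N:ℝ) * v) := by
      have h10 := Real.rpow_le_rpow hz.le hz2 (by norm_num : (0:ℝ) ≤ 1/2)
      have h11 : ((u₁ * ((N:ℝ) * v))^2) ^ ((1:ℝ)/2) = u₁ * ((N:ℝ) * v) := by
        rw [← Real.rpow_natCast (u₁ * ((N:ℝ) * v)) 2, ← Real.rpow_mul (by positivity)]
        norm_num
      rw [hadef]
      calc z ^ ((1:ℝ)/2) ≤ ((u₁ * ((N:ℝ) * v))^2) ^ ((1:ℝ)/2) := h10
        _ = u₁ * ((N:ℝ) * v) := h11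
    rw [hudef, div_le_iff₀ (by positivity)]
    linarith [haa]
  have huabs : |u| = u := abs_of_pos hu
  have huu₁ : |u| ≤ u₁ := by rw [huabs]; exact hu1
  have huu₀ : |u| ≤ u₀ := by
    rw [huabs]
    have := min_le_left (u₀/2) ((v-1)/(M₀+1))
    rw [← hu₁def] at this
    linarith
  have hunegabs : |(-u)| ≤ u₁ := by rwa [abs_neg]
  have hunegu₀ : |(-u)| ≤ u₀ := by rwa [abs_neg]
  -- the two helper bounds
  have hN1 : 1 ≤ N := by omega
  have Hp := doob_helper P X hmeas hindep u a hu ha (fun k => hmgf k u huu₀)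
    (fun k => hone u huu₀ k) N hN1
  -- negated variables
  have hmeas' : ∀ k, Measurable (fun ω => -X k ω) := fun k => (hmeas k).neg
  have hindep' : iIndepFun (fun k ω => -X k ω) P := by
    have := hindep.comp (fun _ => (fun x : ℝ => -x)) (fun _ => measurable_neg)
    exact this
  have hint' : ∀ k, Integrable (fun ω => Real.exp (u * (-X k ω))) P := by
    intro k
    refine (hmgf k (-u) hunegu₀).congr (Filter.Eventually.of_forall fun ω => ?_)
    ring_nf
  have h1' : ∀ k, 1 ≤ ∫ ω, Real.exp (u * (-X k ω)) ∂P := by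
    intro k
    have := hone (-u) hunegu₀ k
    have heq : ∫ ω, Real.exp ((-u) * X k ω) ∂P = ∫ ω, Real.exp (u * (-X k ω)) ∂P := by
      congr 1; funext ω; ring_nf
    linarith [heq.symm.le, heq.le]
  have Hm := doob_helper P (fun k ω => -X k ω) hmeas' hindep' u a hu ha hint' h1' N hN1
  -- bound the products
  have hfactp : ∀ i, mgf (X i) P u ≤ Real.exp (v * u^2 / 2) := by
    intro i
    have hphi : Measurable (fun x : ℝ => Real.exp (u * x)) := (measurable_id.const_mul u).exp
    have heq : mgf (X i) P u = mgf (X 0) P u := ((hident i).comp hphi).integral_eq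
    rw [heq]
    exact hmgfb u huu₁
  have hfactm : ∀ i, mgf (fun ω => -X i ω) P u ≤ Real.exp (v * u^2 / 2) := by
    intro i
    have hphi : Measurable (fun x : ℝ => Real.exp (u * -x)) :=
      (measurable_neg.const_mul u).exp
    have heq : mgf (fun ω => -X i ω) P u = ∫ ω, Real.exp (u * -X 0 ω) ∂P :=
      ((hident i).comp hphi).integral_eq
    have heq2 : ∫ ω, Real.exp (u * -X 0 ω) ∂P = mgf (X 0) P (-u) := by
      unfold mgf
      congr 1; funext ω; ring_nf
    have := hmgfb (-u) hunegabs
    rw [neg_sq] at this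
    rw [heq, heq2]
    exact this
  have hprodp : ∏ i ∈ Finset.range N, mgf (X i) P u ≤ Real.exp (v * u^2 / 2) ^ N := by
    calc ∏ i ∈ Finset.range N, mgf (X i) P u ≤ ∏ _i ∈ Finset.range N, Real.exp (v * u^2 / 2) :=
          Finset.prod_le_prod (fun i _ => mgf_nonneg) (fun i _ => hfactp i)
      _ = Real.exp (v * u^2 / 2) ^ N := by rw [Finset.prod_const, Finset.card_range]
  have hprodm : ∏ i ∈ Finset.range N, mgf (fun ω => -X i ω) P u
      ≤ Real.exp (v * u^2 / 2) ^ N := by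
    calc ∏ i ∈ Finset.range N, mgf (fun ω => -X i ω) P u
        ≤ ∏ _i ∈ Finset.range N, Real.exp (v * u^2 / 2) :=
          Finset.prod_le_prod (fun i _ => mgf_nonneg) (fun i _ => hfactm i)
      _ = Real.exp (v * u^2 / 2) ^ N := by rw [Finset.prod_const, Finset.card_range]
  -- arithmetic identity
  have hNne : (N:ℝ) ≠ 0 := hNpos.ne'
  have harith : -(u * a) + (N:ℝ) * (v * u^2 / 2) = (1 - C) * Real.log N := by
    have h5 : -(u * a) + (N:ℝ) * (v * u^2 / 2) = -(a^2) / (2 * ((N:ℝ) * v)) := by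
      rw [hudef]; field_simp; ring
    rw [h5, ha2, hzdef, hvdef]
    field_simp
    ring
  have hT : Real.exp (-(u * a)) * Real.exp (v * u^2 / 2) ^ N = (N:ℝ) ^ (1 - C) := by
    rw [← Real.exp_nat_mul, ← Real.exp_add, harith, Real.rpow_def_of_pos hNpos]
    ring_nf
  -- combine
  have hboundp : P {ω | ∃ j ≤ N, a ≤ ∑ i ∈ Finset.range j, X i ω}
      ≤ ENNReal.ofReal ((N:ℝ) ^ (1 - C)) := by
    refine le_trans Hp (ENNReal.ofReal_le_ofReal ?_)
    rw [← hT]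
    exact mul_le_mul_of_nonneg_left hprodp (Real.exp_nonneg _)
  have hboundm : P {ω | ∃ j ≤ N, a ≤ ∑ i ∈ Finset.range j, -X i ω}
      ≤ ENNReal.ofReal ((N:ℝ) ^ (1 - C)) := by
    refine le_trans Hm (ENNReal.ofReal_le_ofReal ?_)
    rw [← hT]
    exact mul_le_mul_of_nonneg_left hprodm (Real.exp_nonneg _)
  have hsubset : {ω | ∃ j ≤ N, (2 * C * (N:ℝ) * Real.log N) ^ ((1:ℝ)/2)
        ≤ |∑ i ∈ Finset.range j, X i ω|}
      ⊆ {ω | ∃ j ≤ N, a ≤ ∑ i ∈ Finset.range j, X i ω}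
        ∪ {ω | ∃ j ≤ N, a ≤ ∑ i ∈ Finset.range j, -X i ω} := by
    rintro ω ⟨j, hj, habs⟩
    have haeq : a = (2 * C * (N:ℝ) * Real.log N) ^ ((1:ℝ)/2) := by rw [hadef, hzdef]
    rw [← haeq] at habs
    rcases le_abs.1 habs with h | h
    · exact Or.inl ⟨j, hj, h⟩
    · right
      refine ⟨j, hj, ?_⟩
      rw [← Finset.sum_neg_distrib] at h
      exact h
  calc P {ω | ∃ j ≤ N, (2 * C * (N:ℝ) * Real.log N) ^ ((1:ℝ)/2)
        ≤ |∑ i ∈ Finset.range j, X i ω|}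
      ≤ P ({ω | ∃ j ≤ N, a ≤ ∑ i ∈ Finset.range j, X i ω}
          ∪ {ω | ∃ j ≤ N, a ≤ ∑ i ∈ Finset.range j, -X i ω}) := measure_mono hsubset
    _ ≤ P {ω | ∃ j ≤ N, a ≤ ∑ i ∈ Finset.range j, X i ω}
        + P {ω | ∃ j ≤ N, a ≤ ∑ i ∈ Finset.range j, -X i ω} := measure_union_le _ _
    _ ≤ ENNReal.ofReal ((N:ℝ) ^ (1 - C)) + ENNReal.ofReal ((N:ℝ) ^ (1 - C)) :=
        add_le_add hboundp hboundm
    _ = ENNReal.ofReal (2 * (N:ℝ) ^ (1 - C)) := by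
        rw [← ENNReal.ofReal_add (Real.rpow_nonneg hNpos.le _) (Real.rpow_nonneg hNpos.le _)]
        ring_nf
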